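/- arXiv:1812.09461 — 2 statements merged into one kernel-verified Lean document; each statement's English description precedes it below -/
import Mathlib

section
/- Let n ≥ 3 and q ≥ 1 be integers and let K_1, …, K_q be positive real numbers. If α in the open positive orthant of ℝ^q satisfies |α|² K_i α_i^{4/(n-2)} = S(α) for every i, then the Hessian of f at α is given, for all indices i, j, by (1/2)·∂²f/∂α_i∂α_j (α) = (4/((n−2) S(α)^{(n-2)/n})) · (−δ_{ij} + α_i α_j / |α|²), where δ_{ij} is the Kronecker delta. -/
open Finset

set_option maxHeartbeats 2000000 in
/-- Hessian of the reduced multi-bubble energy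
`f(α) = (Σ αᵢ²)/(Σ Kᵢ αᵢ^{2n/(n-2)})^{(n-2)/n}` at a critical point (characterized by
`|α|²·Kᵢαᵢ^{4/(n-2)} = S(α)` for all `i`):
`(1/2)·∂²f/∂αᵢ∂αⱼ(α) = (4/((n−2)S(α)^{(n-2)/n}))·(−δᵢⱼ + αᵢαⱼ/|α|²)`. -/
theorem stmt_4 (n q : ℕ) (hn : 3 ≤ n) (hq : 1 ≤ q)
    (K : Fin q → ℝ) (hK : ∀ i, 0 < K i)
    (f : (Fin q → ℝ) → ℝ)
    (hf : f = fun α => (∑ i, α i ^ 2) /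
        (∑ i, K i * α i ^ (2 * (n : ℝ) / ((n : ℝ) - 2))) ^ (((n : ℝ) - 2) / (n : ℝ)))
    (α : Fin q → ℝ) (hα : ∀ i, 0 < α i)
    (hcrit : ∀ i, (∑ j, α j ^ 2) * (K i * α i ^ ((4 : ℝ) / ((n : ℝ) - 2)))
      = ∑ j, K j * α j ^ (2 * (n : ℝ) / ((n : ℝ) - 2))) :
    ∀ i j : Fin q,
      (1 / 2) * fderiv ℝ (fun x => fderiv ℝ f x (Pi.single j 1)) α (Pi.single i 1)
        = 4 / (((n : ℝ) - 2) *
            (∑ k, K k * α k ^ (2 * (n : ℝ) / ((n : ℝ) - 2))) ^ (((n : ℝ) - 2) / (n : ℝ))) *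
          (-(if i = j then (1 : ℝ) else 0) + α i * α j / ∑ k, α k ^ 2) := by
  intro i j
  have hqne : Nonempty (Fin q) := Fin.pos_iff_nonempty.mp hq
  set p : ℝ := 2 * (n : ℝ) / ((n : ℝ) - 2) with hp
  set θ : ℝ := ((n : ℝ) - 2) / (n : ℝ) with hθ
  have hn3 : (3:ℝ) ≤ (n:ℝ) := by exact_mod_cast hn
  have hn2 : (0:ℝ) < (n:ℝ) - 2 := by linarith
  have hθp : θ * p = 2 := by rw [hp, hθ]; field_simp
  set S : (Fin q → ℝ) → ℝ := fun x => ∑ k, K k * x k ^ p with hS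
  set A : (Fin q → ℝ) → ℝ := fun x => ∑ k, x k ^ 2 with hA
  set U : Set (Fin q → ℝ) := {x | ∀ k, 0 < x k} with hU
  have hUopen : IsOpen U := by
    have : U = ⋂ k, {x : Fin q → ℝ | 0 < x k} := by ext x; simp [hU, Set.mem_iInter]
    rw [this]
    exact isOpen_iInter_of_finite fun k => isOpen_lt continuous_const (continuous_apply k)
  have hαU : α ∈ U := hα
  have hSpos : ∀ x ∈ U, 0 < S x := fun x hx =>
    Finset.sum_pos (fun k _ => mul_pos (hK k) (Real.rpow_pos_of_pos (hx k) p)) univ_nonempty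
  have hApos : ∀ x ∈ U, 0 < A x := fun x hx =>
    Finset.sum_pos (fun k _ => pow_pos (hx k) 2) univ_nonempty
  set LS : (Fin q → ℝ) → (Fin q → ℝ) →L[ℝ] ℝ :=
    fun x => ∑ k, K k • ((p * x k ^ (p - 1)) • (ContinuousLinearMap.proj k : (Fin q → ℝ) →L[ℝ] ℝ)) with hLS
  have hS' : ∀ x ∈ U, HasFDerivAt S (LS x) x := fun x hx =>
    HasFDerivAt.fun_sum fun k _ =>
      ((hasFDerivAt_apply k x).rpow_const (Or.inl (hx k).ne')).const_mul (K k)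
  have hLSapp : ∀ x, ∀ m : Fin q, LS x (Pi.single m 1) = K m * (p * x m ^ (p - 1)) := by
    intro x m
    simp [hLS, ContinuousLinearMap.sum_apply, Pi.single_apply]
  set LA : (Fin q → ℝ) → (Fin q → ℝ) →L[ℝ] ℝ :=
    fun x => ∑ k, (2 * x k) • (ContinuousLinearMap.proj k : (Fin q → ℝ) →L[ℝ] ℝ) with hLA
  have hA' : ∀ x, HasFDerivAt A (LA x) x := by
    intro x
    apply HasFDerivAt.fun_sum
    intro k _
    have h := HasDerivAt.comp_hasFDerivAt (𝕜 := ℝ) x (hasDerivAt_pow 2 (x k)) (hasFDerivAt_apply k x)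
    norm_num at h
    exact h
  have hLAapp : ∀ x, ∀ m : Fin q, LA x (Pi.single m 1) = 2 * x m := by
    intro x m
    simp [hLA, ContinuousLinearMap.sum_apply, Pi.single_apply]
  -- first derivative of f
  set F : (Fin q → ℝ) → ℝ := fun x => A x * S x ^ (-θ) with hF
  set LF : (Fin q → ℝ) → (Fin q → ℝ) →L[ℝ] ℝ :=
    fun x => A x • ((-θ * S x ^ (-θ - 1)) • LS x) + (S x ^ (-θ)) • LA x with hLF
  have hF' : ∀ x ∈ U, HasFDerivAt F (LF x) x := fun x hx =>
    (hA' x).mul ((hS' x hx).rpow_const (Or.inl (hSpos x hx).ne'))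
  have hfFU : Set.EqOn f F U := by
    intro x hx
    rw [hf]
    show (∑ k, x k ^ 2) / (∑ k, K k * x k ^ p) ^ θ = A x * S x ^ (-θ)
    rw [Real.rpow_neg (hSpos x hx).le, div_eq_mul_inv]
  have hfd1 : ∀ x ∈ U, fderiv ℝ f x = LF x := by
    intro x hx
    have hev : f =ᶠ[nhds x] F := Filter.eventuallyEq_of_mem (hUopen.mem_nhds hx) hfFU
    rw [hev.fderiv_eq, (hF' x hx).fderiv]
  set G : (Fin q → ℝ) → ℝ := fun x =>
      2 * x j * S x ^ (-θ) - 2 * A x * (K j * x j ^ (p - 1)) * S x ^ (-θ - 1) with hG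
  have hGeq : ∀ x ∈ U, fderiv ℝ f x (Pi.single j 1) = G x := by
    intro x hx
    rw [hfd1 x hx]
    simp only [hLF, hG, ContinuousLinearMap.add_apply, ContinuousLinearMap.smul_apply,
      smul_eq_mul, hLSapp, hLAapp]
    linear_combination (-(A x * (K j * x j ^ (p-1)) * S x ^ (-θ-1))) * hθp
  have hev2 : (fun x => fderiv ℝ f x (Pi.single j 1)) =ᶠ[nhds α] G :=
    Filter.eventuallyEq_of_mem (hUopen.mem_nhds hαU) hGeq
  rw [hev2.fderiv_eq]
  -- second derivative
  have hc1 : HasFDerivAt (fun x : Fin q → ℝ => 2 * x j)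
      ((2:ℝ) • (ContinuousLinearMap.proj j : (Fin q → ℝ) →L[ℝ] ℝ)) α :=
    (hasFDerivAt_apply j α).const_mul 2
  have hc2 := (hS' α hαU).rpow_const (p := -θ) (Or.inl (hSpos α hαU).ne')
  have hc := hc1.fun_mul hc2
  have hd1 := (hA' α).const_mul (2:ℝ)
  have hd2 := ((hasFDerivAt_apply j α).rpow_const (p := p - 1) (Or.inl (hα j).ne')).const_mul (K j)
  have hd12 := hd1.fun_mul hd2
  have hd3 := (hS' α hαU).rpow_const (p := -θ - 1) (Or.inl (hSpos α hαU).ne')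
  have hd := hd12.fun_mul hd3
  have hGder : HasFDerivAt G _ α := hc.fun_sub hd
  rw [hGder.fderiv]
  simp only [ContinuousLinearMap.sub_apply, ContinuousLinearMap.add_apply,
    ContinuousLinearMap.smul_apply, smul_eq_mul, hLSapp, hLAapp,
    ContinuousLinearMap.proj_apply, Pi.single_apply]
  have hsp : (0:ℝ) < S α := hSpos α hαU
  have hap : (0:ℝ) < A α := hApos α hαU
  have hexp42 : (4:ℝ)/((n:ℝ)-2) = p - 2 := by rw [hp]; field_simp; ring
  have hcrit' : ∀ k, K k * α k ^ (p-2) = S α / A α := by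
    intro k
    have h := hcrit k
    rw [hexp42] at h
    rw [eq_div_iff hap.ne']
    show K k * α k ^ (p - 2) * (∑ m, α m ^ 2) = ∑ m, K m * α m ^ p
    linear_combination h
  have hui : (0:ℝ) < α i ^ (p-2) := Real.rpow_pos_of_pos (hα i) _
  have hvj : (0:ℝ) < α j ^ (p-2) := Real.rpow_pos_of_pos (hα j) _
  have htp : (0:ℝ) < S α ^ θ := Real.rpow_pos_of_pos hsp _
  have hKi : K i = S α / A α / α i ^ (p - 2) := by
    rw [eq_div_iff hui.ne']; exact hcrit' i
  have hKj : K j = S α / A α / α j ^ (p - 2) := by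
    rw [eq_div_iff hvj.ne']; exact hcrit' j
  have hri : α i ^ (p-1) = α i ^ (p-2) * α i := by
    rw [show p - 1 = p - 2 + 1 by ring, Real.rpow_add (hα i), Real.rpow_one]
  have hrj : α j ^ (p-1) = α j ^ (p-2) * α j := by
    rw [show p - 1 = p - 2 + 1 by ring, Real.rpow_add (hα j), Real.rpow_one]
  have hrj2 : α j ^ (p-1-1) = α j ^ (p-2) := by rw [show p-1-1 = p-2 by ring]
  have hs0 : S α ^ (-θ) = (S α ^ θ)⁻¹ := by rw [Real.rpow_neg hsp.le]
  have hs1 : S α ^ (-θ-1) = (S α ^ θ)⁻¹ * (S α)⁻¹ := by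
    rw [show -θ-1 = -θ + (-1) by ring, Real.rpow_add hsp, Real.rpow_neg_one,
      Real.rpow_neg hsp.le]
  have hs2 : S α ^ (-θ-1-1) = (S α ^ θ)⁻¹ * (S α)⁻¹ * (S α)⁻¹ := by
    rw [show -θ-1-1 = -θ + (-1) + (-1) by ring, Real.rpow_add hsp, Real.rpow_add hsp,
      Real.rpow_neg_one, Real.rpow_neg hsp.le]
  have hδ : (if j = i then (1:ℝ) else 0) = (if i = j then (1:ℝ) else 0) := by
    simp [eq_comm]
  rw [hδ, hri, hrj, hrj2, hs0, hs1, hs2, hKi, hKj,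
    show (∑ k, K k * α k ^ p) = S α from rfl, show (∑ k, α k ^ 2) = A α from rfl]
  set u := α i ^ (p-2) with hu
  set v := α j ^ (p-2) with hv
  set t := S α ^ θ with ht
  rw [hp, hθ]
  have hn0 : (n:ℝ) ≠ 0 := by linarith
  rcases eq_or_ne i j with hij | hij
  · simp only [if_pos hij]
    field_simp
    ring
  · simp only [if_neg hij]
    field_simp
    ring
end

section
/- Let n ≥ 3 and q ≥ 1 be integers and let K_1, …, K_q be positive real numbers. If α in the open positive orthant of ℝ^q is a critical point of f, then the Hessian matrix H of f at α is negative semidefinite, its kernel is exactly the line ℝ·α, and every nonzero vector v ∈ ℝ^q orthogonal to α is an eigenvector of H with eigenvalue −8/((n−2) S(α)^{(n-2)/n}). In particular H has exactly q − 1 negative eigenvalues (counted with multiplicity) and a one-dimensional kernel. -/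
open Finset Matrix

variable {q : ℕ}

noncomputable def P (j : Fin q) : (Fin q → ℝ) →L[ℝ] ℝ := ContinuousLinearMap.proj j

lemma hP (j : Fin q) (x : Fin q → ℝ) : HasFDerivAt (fun y : Fin q → ℝ => y j) (P j) x :=
  (P j).hasFDerivAt

-- derivative of D
lemma hD (K : Fin q → ℝ) (p : ℝ) (x : Fin q → ℝ) (hx : ∀ i, 0 < x i) :
    HasFDerivAt (fun y : Fin q → ℝ => ∑ i, K i * y i ^ p)
      (∑ i, (K i * (p * x i ^ (p - 1))) • P i) x := by
  apply HasFDerivAt.fun_sum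
  intro i _
  have h1 : HasFDerivAt (fun y : Fin q → ℝ => y i ^ p) ((p * x i ^ (p-1)) • P i) x :=
    by have := (Real.hasDerivAt_rpow_const (p := p) (Or.inl (hx i).ne')).comp_hasFDerivAt x (hP i x); exact this
  have := h1.const_mul (K i)
  simpa [smul_smul] using this

lemma hN (x : Fin q → ℝ) :
    HasFDerivAt (fun y : Fin q → ℝ => ∑ i, y i ^ 2) (∑ i, (2 * x i) • P i) x := by
  apply HasFDerivAt.fun_sum
  intro i _
  simpa [Function.comp_def] using (hasDerivAt_pow 2 (x i)).comp_hasFDerivAt x (hP i x)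


noncomputable def psi (K : Fin q → ℝ) (p θ : ℝ) (j : Fin q) (x : Fin q → ℝ) : ℝ :=
  2 * x j * ((∑ i, K i * x i ^ p) ^ θ)⁻¹
  - (∑ i, x i ^ 2) * (((∑ i, K i * x i ^ p) ^ θ) * ((∑ i, K i * x i ^ p) ^ θ))⁻¹ *
      (θ * (∑ i, K i * x i ^ p) ^ (θ-1) * (K j * (p * x j ^ (p-1))))

lemma first_deriv (K : Fin q → ℝ) (hK : ∀ i, 0 < K i) (p θ : ℝ) (hq : 0 < q)
    (x : Fin q → ℝ) (hx : ∀ i, 0 < x i) (j : Fin q) :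
    fderiv ℝ (fun y : Fin q → ℝ => (∑ i, y i ^ 2) / (∑ i, K i * y i ^ p) ^ θ) x
      (Pi.single j 1) = psi K p θ j x := by
  have hD0 : 0 < ∑ i, K i * x i ^ p := by
    apply Finset.sum_pos (fun i _ => mul_pos (hK i) (Real.rpow_pos_of_pos (hx i) p))
    exact ⟨⟨0, hq⟩, mem_univ _⟩
  have hG0 : ((∑ i, K i * x i ^ p) ^ θ : ℝ) ≠ 0 := (Real.rpow_pos_of_pos hD0 θ).ne'
  have hG : HasFDerivAt (fun y : Fin q → ℝ => (∑ i, K i * y i ^ p) ^ θ)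
      ((θ * (∑ i, K i * x i ^ p) ^ (θ-1)) • (∑ i, (K i * (p * x i ^ (p - 1))) • P i)) x :=
    by have := (Real.hasDerivAt_rpow_const (p := θ) (Or.inl hD0.ne')).comp_hasFDerivAt x (hD K p x hx); exact this
  have hGinv := (hasDerivAt_inv hG0).comp_hasFDerivAt x hG
  have hf := (hN x).fun_mul hGinv
  rw [show (fun y : Fin q → ℝ => (∑ i, y i ^ 2) / (∑ i, K i * y i ^ p) ^ θ)
      = (fun y => (∑ i, y i ^ 2) * ((fun t : ℝ => t⁻¹) ∘
          (fun y : Fin q → ℝ => (∑ i, K i * y i ^ p) ^ θ)) y)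
      from funext fun y => div_eq_mul_inv _ _, hf.fderiv]
  simp only [ContinuousLinearMap.add_apply, ContinuousLinearMap.smul_apply,
    ContinuousLinearMap.coe_sum', Finset.sum_apply, ContinuousLinearMap.coe_smul',
    Pi.smul_apply, P, ContinuousLinearMap.proj_apply, Pi.single_apply, smul_eq_mul,
    mul_ite, mul_one, mul_zero, Finset.sum_ite_eq', mem_univ, if_true, Function.comp]
  unfold psi
  ring


set_option maxHeartbeats 2000000 in
lemma second_deriv (K : Fin q → ℝ) (hK : ∀ i, 0 < K i) (p θ : ℝ) (hq : 0 < q)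
    (hθp : θ * p = 2) (x : Fin q → ℝ) (hx : ∀ i, 0 < x i)
    (hc : ∀ j, K j * x j ^ (p-1) = x j * (∑ i, K i * x i ^ p) / (∑ i, x i ^ 2))
    (i j : Fin q) :
    fderiv ℝ (psi K p θ j) x (Pi.single i 1)
      = (2*p - 4) / (∑ k, K k * x k ^ p) ^ θ *
          (x i * x j / (∑ k, x k ^ 2) - if i = j then 1 else 0) := by
  have hD0 : 0 < ∑ i, K i * x i ^ p := by
    apply Finset.sum_pos (fun i _ => mul_pos (hK i) (Real.rpow_pos_of_pos (hx i) p))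
    exact ⟨⟨0, hq⟩, Finset.mem_univ _⟩
  have hN0 : 0 < ∑ i, x i ^ 2 := by
    apply Finset.sum_pos (fun i _ => pow_pos (hx i) 2)
    exact ⟨⟨0, hq⟩, Finset.mem_univ _⟩
  have hGpos : (0:ℝ) < (∑ i, K i * x i ^ p) ^ θ := Real.rpow_pos_of_pos hD0 θ
  have hG0 : ((∑ i, K i * x i ^ p) ^ θ : ℝ) ≠ 0 := hGpos.ne'
  have hG : HasFDerivAt (fun y : Fin q → ℝ => (∑ i, K i * y i ^ p) ^ θ)
      ((θ * (∑ i, K i * x i ^ p) ^ (θ-1)) • (∑ i, (K i * (p * x i ^ (p - 1))) • P i)) x :=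
    by have := (Real.hasDerivAt_rpow_const (p := θ) (Or.inl hD0.ne')).comp_hasFDerivAt x (hD K p x hx); exact this
  have hGinv := (hasDerivAt_inv hG0).comp_hasFDerivAt x hG
  have hA : HasFDerivAt (fun y : Fin q → ℝ => 2 * y j) ((2:ℝ) • P j) x :=
    (hP j x).const_mul 2
  have hT1 := hA.fun_mul hGinv
  have hGG := hG.fun_mul hG
  have hGG0 : ((∑ i, K i * x i ^ p) ^ θ : ℝ) * (∑ i, K i * x i ^ p) ^ θ ≠ 0 :=
    mul_ne_zero hG0 hG0
  have hGGinv := (hasDerivAt_inv hGG0).comp_hasFDerivAt x hGG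
  have hRθ : HasFDerivAt (fun y : Fin q → ℝ => (∑ i, K i * y i ^ p) ^ (θ-1))
      (((θ-1) * (∑ i, K i * x i ^ p) ^ (θ-1-1)) • (∑ i, (K i * (p * x i ^ (p - 1))) • P i)) x :=
    by have := (Real.hasDerivAt_rpow_const (p := θ-1) (Or.inl hD0.ne')).comp_hasFDerivAt x (hD K p x hx); exact this
  have hQ1 := hRθ.const_mul θ
  have hpw : HasFDerivAt (fun y : Fin q → ℝ => y j ^ (p-1))
      (((p-1) * x j ^ (p-1-1)) • P j) x :=
    by have := (Real.hasDerivAt_rpow_const (p := p-1) (Or.inl (hx j).ne')).comp_hasFDerivAt x (hP j x); exact this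
  have hpw2 := (hpw.const_mul p).const_mul (K j)
  have hQ := hQ1.fun_mul hpw2
  have hT2 := ((hN x).fun_mul hGGinv).fun_mul hQ
  have hcomb := hT1.fun_sub hT2
  rw [(show HasFDerivAt (psi K p θ j) _ x from hcomb).fderiv]
  simp only [ContinuousLinearMap.add_apply, ContinuousLinearMap.sub_apply,
    ContinuousLinearMap.smul_apply,
    ContinuousLinearMap.coe_sum', Finset.sum_apply, ContinuousLinearMap.coe_smul',
    Pi.smul_apply, P, ContinuousLinearMap.proj_apply, Pi.single_apply, smul_eq_mul,
    mul_ite, mul_one, mul_zero, Finset.sum_ite_eq', Finset.mem_univ, if_true, Function.comp]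
  have hp0 : p ≠ 0 := by rintro rfl; simp at hθp
  have hθ : θ = 2 / p := by field_simp; linarith [hθp]
  have h2 : (∑ k, K k * x k ^ p) ^ (θ-1-1) = (∑ k, K k * x k ^ p) ^ (θ-1) / (∑ k, K k * x k ^ p) :=
    Real.rpow_sub_one hD0.ne' _
  have h1 : (∑ k, K k * x k ^ p) ^ (θ-1) = (∑ k, K k * x k ^ p) ^ θ / (∑ k, K k * x k ^ p) :=
    Real.rpow_sub_one hD0.ne' _
  have h3 : x j ^ (p-1-1) = x j ^ (p-1) / x j := Real.rpow_sub_one (hx j).ne' _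
  have hc' : ∀ m, x m ^ (p-1) = x m * (∑ k, K k * x k ^ p) / ((∑ k, x k ^ 2) * K m) := by
    intro m
    have h := hc m
    rw [eq_div_iff (mul_ne_zero hN0.ne' (hK m).ne')]
    field_simp at h
    linear_combination h
  clear hG hGinv hA hT1 hGG hGGinv hRθ hQ1 hpw hpw2 hQ hT2 hcomb hc hGG0
  set D := ∑ k, K k * x k ^ p with hDdef
  set N := ∑ k, x k ^ 2 with hNdef
  rw [h2, h3, h1, hc' i, hc' j, hθ]
  set G := D ^ (2/p : ℝ) with hGdef
  have hG0' : G ≠ 0 := by rw [hGdef]; exact (Real.rpow_pos_of_pos hD0 _).ne'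
  have hxi := (hx i).ne'
  have hxj := (hx j).ne'
  have hKi := (hK i).ne'
  have hKj := (hK j).ne'
  rcases eq_or_ne i j with rfl | hij
  · simp only [if_pos rfl, eq_self_iff_true, if_true]
    field_simp
    ring
  · simp only [if_neg hij, if_neg (Ne.symm hij)]
    field_simp
    ring


set_option maxHeartbeats 1000000 in
/-- At a critical point `α` of the reduced multi-bubble energy
`f(α) = (Σ αᵢ²)/(Σ Kᵢ αᵢ^{2n/(n-2)})^{(n-2)/n}` in the positive orthant, the Hessian
matrix `H` is negative semidefinite, its kernel is exactly the line `ℝ·α`, every nonzero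
vector orthogonal to `α` is an eigenvector with eigenvalue `−8/((n−2)S(α)^{(n-2)/n})`,
and hence `H` has a one-dimensional kernel and `q − 1` negative eigenvalues. -/
theorem stmt_5 (n q : ℕ) (hn : 3 ≤ n) (hq : 1 ≤ q)
    (K : Fin q → ℝ) (hK : ∀ i, 0 < K i)
    (f : (Fin q → ℝ) → ℝ)
    (hf : f = fun α => (∑ i, α i ^ 2) /
        (∑ i, K i * α i ^ (2 * (n : ℝ) / ((n : ℝ) - 2))) ^ (((n : ℝ) - 2) / (n : ℝ)))
    (α : Fin q → ℝ) (hα : ∀ i, 0 < α i)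
    (hcrit : ∀ i, fderiv ℝ f α (Pi.single i 1) = 0)
    (H : Matrix (Fin q) (Fin q) ℝ)
    (hH : H = Matrix.of fun i j =>
      fderiv ℝ (fun x => fderiv ℝ f x (Pi.single j 1)) α (Pi.single i 1)) :
    (∀ v : Fin q → ℝ, v ⬝ᵥ H.mulVec v ≤ 0) ∧
    (∀ v : Fin q → ℝ, H.mulVec v = 0 ↔ ∃ c : ℝ, v = c • α) ∧
    (∀ v : Fin q → ℝ, v ≠ 0 → (∑ i, v i * α i) = 0 →
      H.mulVec v = (-8 / (((n : ℝ) - 2) *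
        (∑ k, K k * α k ^ (2 * (n : ℝ) / ((n : ℝ) - 2))) ^ (((n : ℝ) - 2) / (n : ℝ)))) • v) ∧
    Module.finrank ℝ (LinearMap.ker H.mulVecLin) = 1 ∧
    Module.finrank ℝ (Module.End.eigenspace H.mulVecLin
      (-8 / (((n : ℝ) - 2) *
        (∑ k, K k * α k ^ (2 * (n : ℝ) / ((n : ℝ) - 2))) ^ (((n : ℝ) - 2) / (n : ℝ))))) = q - 1 := by
  have hq0 : 0 < q := hq
  have hn3 : (3:ℝ) ≤ (n:ℝ) := by exact_mod_cast hn
  have hn2 : (0:ℝ) < (n:ℝ) - 2 := by linarith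
  have hnpos : (0:ℝ) < (n:ℝ) := by linarith
  set p : ℝ := 2 * (n:ℝ) / ((n:ℝ) - 2) with hpdef
  set θ : ℝ := ((n:ℝ) - 2) / (n:ℝ) with hθdef
  have hθp : θ * p = 2 := by
    rw [hpdef, hθdef]; field_simp
  have hp0 : p ≠ 0 := by rintro h; rw [h] at hθp; simp at hθp
  have hθ2 : θ = 2 / p := by field_simp; linarith [hθp]
  have hD0 : 0 < ∑ k, K k * α k ^ p := by
    apply Finset.sum_pos (fun i _ => mul_pos (hK i) (Real.rpow_pos_of_pos (hα i) p))
    exact ⟨⟨0, hq0⟩, Finset.mem_univ _⟩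
  have hN0 : 0 < ∑ k, α k ^ 2 := by
    apply Finset.sum_pos (fun i _ => pow_pos (hα i) 2)
    exact ⟨⟨0, hq0⟩, Finset.mem_univ _⟩
  have hGpos : (0:ℝ) < (∑ k, K k * α k ^ p) ^ θ := Real.rpow_pos_of_pos hD0 θ
  -- critical point relation
  rw [hf] at hcrit
  have hcrit' : ∀ j, psi K p θ j α = 0 := fun j => by
    rw [← first_deriv K hK p θ hq0 α hα j]; exact hcrit j
  have hc : ∀ j, K j * α j ^ (p - 1) =
      α j * (∑ k, K k * α k ^ p) / (∑ k, α k ^ 2) := by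
    intro j
    have h0 := hcrit' j
    unfold psi at h0
    rw [Real.rpow_sub_one hD0.ne' θ, hθ2] at h0
    rw [eq_div_iff hN0.ne']
    have hG0 : ((∑ k, K k * α k ^ p) ^ θ : ℝ) ≠ 0 := hGpos.ne'
    rw [hθ2] at hG0
    field_simp at h0
    have hfac : (2 * p * ((∑ k, K k * α k ^ p) ^ (2/p) * (∑ k, K k * α k ^ p) ^ (2/p))) *
        (α j * (∑ k, K k * α k ^ p) - (∑ k, α k ^ 2) * (K j * α j ^ (p - 1))) = 0 := by
      linear_combination (p * ((∑ k, K k * α k ^ p) ^ (2/p)) ^ 2) * h0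
    rcases mul_eq_zero.mp hfac with h | h
    · exact absurd h (by positivity)
    · linarith [sub_eq_zero.mp h]
  -- Hessian entries
  have hU : IsOpen {x : Fin q → ℝ | ∀ i, 0 < x i} := by
    have : {x : Fin q → ℝ | ∀ i, 0 < x i} = ⋂ i, {x | 0 < x i} := by ext; simp [Set.mem_iInter]
    rw [this]
    exact isOpen_iInter_of_finite fun i => isOpen_lt continuous_const (continuous_apply i)
  have hmem : {x : Fin q → ℝ | ∀ i, 0 < x i} ∈ nhds α := hU.mem_nhds hα
  have hHij : ∀ i j, H i j = (2 * p - 4) / (∑ k, K k * α k ^ p) ^ θ *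
      (α i * α j / (∑ k, α k ^ 2) - if i = j then 1 else 0) := by
    intro i j
    rw [hH, hf]
    simp only [Matrix.of_apply]
    have heq : (fun x => fderiv ℝ (fun y : Fin q → ℝ =>
        (∑ i, y i ^ 2) / (∑ i, K i * y i ^ p) ^ θ) x (Pi.single j 1))
        =ᶠ[nhds α] psi K p θ j :=
      Filter.eventually_of_mem hmem fun y hy => first_deriv K hK p θ hq0 y hy j
    rw [heq.fderiv_eq]
    exact second_deriv K hK p θ hq0 hθp α hα hc i j
  clear hH hcrit hcrit' hc hf hmem hU
  set D := ∑ k, K k * α k ^ p with hDdef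
  set N := ∑ k, α k ^ 2 with hNdef
  set G := D ^ θ with hGdef
  set c := (2 * p - 4) / G with hcdef
  have hp2 : 2 < p := by
    rw [hpdef, lt_div_iff₀ hn2]; linarith
  have hcpos : 0 < c := div_pos (by linarith) hGpos
  have hμ : -8 / (((n:ℝ) - 2) * G) = -c := by
    rw [hcdef, hpdef]
    field_simp
    ring
  -- mulVec formula
  have hs : ∀ (v : Fin q → ℝ) i, H.mulVec v i
      = c * (α i * (∑ j, α j * v j) / N - v i) := by
    intro v i
    simp only [Matrix.mulVec, dotProduct]
    rw [Finset.sum_congr rfl fun j _ => by rw [hHij i j]]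
    rw [Finset.sum_congr rfl (fun j _ =>
      (by ring : c * (α i * α j / N - (if i = j then 1 else 0)) * v j
        = c * (α i / N) * (α j * v j) - c * ((if i = j then 1 else 0) * v j)))]
    rw [Finset.sum_sub_distrib, ← Finset.mul_sum, ← Finset.mul_sum]
    simp only [ite_mul, one_mul, zero_mul, Finset.sum_ite_eq, Finset.mem_univ, if_true]
    ring
  have hα0 : α ≠ 0 := fun h => (hα ⟨0, hq0⟩).ne' (by rw [h]; rfl)
  -- part 2 first (used in part 4)
  have part2 : ∀ v : Fin q → ℝ, H.mulVec v = 0 ↔ ∃ a : ℝ, v = a • α := by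
    intro v
    constructor
    · intro h0
      refine ⟨(∑ j, α j * v j) / N, ?_⟩
      funext i
      have h1 := congrFun h0 i
      rw [hs] at h1
      have h2 := (mul_eq_zero.mp h1).resolve_left hcpos.ne'
      have h3 := sub_eq_zero.mp h2
      simp only [Pi.smul_apply, smul_eq_mul]
      linear_combination -h3
    · rintro ⟨a, rfl⟩
      funext i
      rw [hs]
      have hS : (∑ j, α j * (a • α) j) = a * N := by
        rw [hNdef, Finset.mul_sum]
        exact Finset.sum_congr rfl fun j _ => by
          simp only [Pi.smul_apply, smul_eq_mul]; ring
      rw [hS]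
      simp only [Pi.smul_apply, smul_eq_mul, Pi.zero_apply]
      field_simp
      ring
  refine ⟨?_, part2, ?_, ?_, ?_⟩
  -- part 1: negative semidefinite
  · intro v
    have hCS := Finset.sum_mul_sq_le_sq_mul_sq Finset.univ α v
    have hexp : v ⬝ᵥ H.mulVec v
        = c * ((∑ j, α j * v j) ^ 2 / N - ∑ i, v i ^ 2) := by
      simp only [dotProduct]
      rw [Finset.sum_congr rfl fun i _ => by rw [hs]]
      rw [Finset.sum_congr rfl (fun i _ =>
        (by ring : v i * (c * (α i * (∑ j, α j * v j) / N - v i))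
          = c * ((∑ j, α j * v j) / N) * (α i * v i) - c * (v i)^2))]
      rw [Finset.sum_sub_distrib, ← Finset.mul_sum, ← Finset.mul_sum]
      ring
    rw [hexp]
    have hle : (∑ j, α j * v j) ^ 2 / N - ∑ i, v i ^ 2 ≤ 0 := by
      rw [sub_nonpos, div_le_iff₀ hN0]
      calc (∑ j, α j * v j) ^ 2 ≤ (∑ j, α j ^ 2) * ∑ j, v j ^ 2 := hCS
        _ = (∑ i, v i ^ 2) * N := by rw [hNdef]; ring
    exact mul_nonpos_iff.mpr (Or.inl ⟨hcpos.le, hle⟩)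
  -- part 3: eigenvector property
  · intro v _ hsum
    have hS : (∑ j, α j * v j) = 0 := by
      rw [← hsum]; exact Finset.sum_congr rfl fun j _ => mul_comm _ _
    funext i
    rw [hs, hS]
    simp only [Pi.smul_apply, smul_eq_mul]
    rw [hμ]
    ring
  -- part 4: kernel
  · have hker : LinearMap.ker H.mulVecLin = Submodule.span ℝ {α} := by
      ext v
      rw [LinearMap.mem_ker, Matrix.mulVecLin_apply, Submodule.mem_span_singleton, part2]
      constructor
      · rintro ⟨a, rfl⟩; exact ⟨a, rfl⟩
      · rintro ⟨a, ha⟩; exact ⟨a, ha.symm⟩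
    rw [hker]
    exact finrank_span_singleton hα0
  -- part 5: eigenspace
  · set ℓ : (Fin q → ℝ) →ₗ[ℝ] ℝ := ∑ i, α i • LinearMap.proj i with hℓdef
    have hℓapp : ∀ v, ℓ v = ∑ i, α i * v i := by
      intro v
      simp [hℓdef, LinearMap.proj_apply]
    have heig : Module.End.eigenspace H.mulVecLin (-8 / (((n:ℝ) - 2) * G))
        = LinearMap.ker ℓ := by
      ext v
      rw [Module.End.mem_eigenspace_iff, LinearMap.mem_ker, hℓapp]
      constructor
      · intro hv
        have h1 := congrFun hv ⟨0, hq0⟩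
        rw [Matrix.mulVecLin_apply] at h1
        rw [hs] at h1
        simp only [Pi.smul_apply, smul_eq_mul] at h1
        rw [hμ] at h1
        have h2 : c * (α ⟨0, hq0⟩ / N) * (∑ j, α j * v j) = 0 := by
          linear_combination h1
        have h3 := (mul_eq_zero.mp h2).resolve_left
          (by
            have := hα ⟨0, hq0⟩
            positivity)
        exact h3
      · intro hS
        funext i
        rw [Matrix.mulVecLin_apply, hs, hS]
        simp only [Pi.smul_apply, smul_eq_mul]
        rw [hμ]
        ring
    rw [heig]
    have hsurj : Function.Surjective ℓ := by
      intro r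
      refine ⟨(r / N) • α, ?_⟩
      rw [hℓapp]
      rw [Finset.sum_congr rfl (fun j _ =>
        (by simp only [Pi.smul_apply, smul_eq_mul]; ring :
          α j * ((r / N) • α) j = r / N * α j ^ 2))]
      rw [← Finset.mul_sum, ← hNdef]
      field_simp
    have h4 := LinearMap.finrank_range_add_finrank_ker ℓ
    rw [LinearMap.range_eq_top.mpr hsurj] at h4
    rw [finrank_top] at h4
    simp [Module.finrank_fintype_fun_eq_card] at h4
    omega
end
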